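/- arXiv:2405.04155 — 2 statements merged into one kernel-verified Lean document; each statement's English description precedes it below -/
import Mathlib

section
/- For every x with |x| ≤ d and every λ ≠ 0, the function h_{d,λ}(x) = -(λx·cosh(λd) - sinh(λx))/(λd·cosh(λd) - sinh(λd)) satisfies |h_{d,λ}(x)| ≤ 1; equivalently, h_{d,λ} maps [-d,d] into [-1,1]. -/
lemma aux_sinh_lt (u : ℝ) (hu : 0 < u) : Real.sinh u < u * Real.cosh u := by
  have hmono : StrictMonoOn (fun t : ℝ => t * Real.cosh t - Real.sinh t) (Set.Ici 0) := by
    apply strictMonoOn_of_deriv_pos (convex_Ici 0)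
    · exact ((continuous_id.mul Real.continuous_cosh).sub Real.continuous_sinh).continuousOn
    · intro t ht
      rw [interior_Ici] at ht
      have hder : HasDerivAt (fun t : ℝ => t * Real.cosh t - Real.sinh t)
          (1 * Real.cosh t + t * Real.sinh t - Real.cosh t) t :=
        ((hasDerivAt_id t).mul (Real.hasDerivAt_cosh t)).sub (Real.hasDerivAt_sinh t)
      rw [hder.deriv]
      rw [Set.mem_Ioi] at ht
      have := Real.sinh_pos_iff.2 ht
      nlinarith [mul_pos ht this]
  have h0 : (0:ℝ) ∈ Set.Ici (0:ℝ) := Set.mem_Ici.2 (le_refl 0)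
  have := hmono h0 (Set.mem_Ici.2 hu.le) hu
  simpa using this

lemma aux_mono (c d : ℝ) (hc : 0 < c) :
    MonotoneOn (fun t : ℝ => c * t * Real.cosh (c * d) - Real.sinh (c * t))
      (Set.Icc (-d) d) := by
  apply monotoneOn_of_deriv_nonneg (convex_Icc _ _)
  · exact (((continuous_const.mul continuous_id).mul continuous_const).sub
      (Real.continuous_sinh.comp (continuous_const.mul continuous_id))).continuousOn
  · intro t _
    exact ((((hasDerivAt_id t).const_mul c).mul_const _).sub
      ((Real.hasDerivAt_sinh (c * t)).comp t
        ((hasDerivAt_id t).const_mul c))).differentiableAt.differentiableWithinAt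
  · intro t ht
    rw [interior_Icc] at ht
    have h1 : HasDerivAt (fun t : ℝ => c * t) (c * 1) t := (hasDerivAt_id t).const_mul c
    have h2 : HasDerivAt (fun t : ℝ => Real.sinh (c * t)) (Real.cosh (c * t) * (c * 1)) t :=
      (Real.hasDerivAt_sinh (c * t)).comp t h1
    have hder : HasDerivAt (fun t : ℝ => c * t * Real.cosh (c * d) - Real.sinh (c * t))
        (c * 1 * Real.cosh (c * d) - Real.cosh (c * t) * (c * 1)) t :=
      (h1.mul_const _).sub h2
    rw [hder.deriv]
    have habs : |c * t| ≤ |c * d| := by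
      rw [abs_mul, abs_mul]
      have : |t| ≤ |d| := by
        rw [abs_le, abs_of_pos (by linarith [ht.1, ht.2, abs_nonneg t] : (0:ℝ) < d)]
        exact ⟨ht.1.le, ht.2.le⟩
      exact mul_le_mul_of_nonneg_left this (abs_nonneg c)
    have := Real.cosh_le_cosh.2 habs
    nlinarith [Real.cosh_pos (c * t)]

lemma aux_bound (c d x : ℝ) (hc : 0 < c) (hd : 0 < d) (hx : |x| ≤ d) :
    |c * x * Real.cosh (c * d) - Real.sinh (c * x)| ≤
      c * d * Real.cosh (c * d) - Real.sinh (c * d) := by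
  have hmem : x ∈ Set.Icc (-d) d := ⟨(abs_le.1 hx).1, (abs_le.1 hx).2⟩
  have hdm : d ∈ Set.Icc (-d) d := ⟨by linarith, le_refl d⟩
  have hndm : -d ∈ Set.Icc (-d) d := ⟨le_refl _, by linarith⟩
  have hm := aux_mono c d hc
  have h1 := hm hmem hdm (abs_le.1 hx).2
  have h2 := hm hndm hmem (abs_le.1 hx).1
  simp only at h1 h2
  rw [abs_le]
  constructor
  · have : c * -d * Real.cosh (c * d) - Real.sinh (c * -d)
        = -(c * d * Real.cosh (c * d) - Real.sinh (c * d)) := by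
      rw [mul_neg, Real.sinh_neg]; ring
    linarith [this ▸ h2]
  · exact h1

theorem stmt_3 (d lam : ℝ) (hd : 0 < d) (hlam : lam ≠ 0)
    (h : ℝ → ℝ)
    (hdef : ∀ x, h x = -(lam * x * Real.cosh (lam * d) - Real.sinh (lam * x)) /
      (lam * d * Real.cosh (lam * d) - Real.sinh (lam * d))) :
    ∀ x : ℝ, |x| ≤ d → |h x| ≤ 1 := by
  intro x hx
  rw [hdef]
  set c := |lam| with hc
  have hc0 : 0 < c := abs_pos.2 hlam
  have heq : -(lam * x * Real.cosh (lam * d) - Real.sinh (lam * x)) /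
      (lam * d * Real.cosh (lam * d) - Real.sinh (lam * d))
      = -(c * x * Real.cosh (c * d) - Real.sinh (c * x)) /
      (c * d * Real.cosh (c * d) - Real.sinh (c * d)) := by
    rcases abs_cases lam with ⟨h1, _⟩ | ⟨h1, _⟩
    · rw [hc, h1]
    · rw [hc, h1]
      rw [show -lam * x = -(lam * x) by ring, show -lam * d = -(lam * d) by ring,
        Real.sinh_neg, Real.sinh_neg, Real.cosh_neg]
      rw [show (-(lam * x) * Real.cosh (lam * d)) = -(lam * x * Real.cosh (lam * d)) by ring]
      rw [show (-(lam * d) * Real.cosh (lam * d)) = -(lam * d * Real.cosh (lam * d)) by ring]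
      rw [show -(-(lam * x * Real.cosh (lam * d)) - -Real.sinh (lam * x))
          = (lam * x * Real.cosh (lam * d) - Real.sinh (lam * x)) by ring]
      rw [show (-(lam * d * Real.cosh (lam * d)) - -Real.sinh (lam * d))
          = -(lam * d * Real.cosh (lam * d) - Real.sinh (lam * d)) by ring]
      rw [div_neg, neg_div]
  rw [heq]
  have hden : 0 < c * d * Real.cosh (c * d) - Real.sinh (c * d) := by
    have := aux_sinh_lt (c * d) (mul_pos hc0 hd)
    linarith
  rw [abs_div, abs_neg, abs_of_pos hden, div_le_one hden]
  exact aux_bound c d x hc0 hd hx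
end

section
/- Let κ₁ ≥ 0, κ₂ > 0, d > 0, T_L > T_U, λ = √(κ₁/κ₂), and define T̄(z) = ((T_L - T_U)/2)·h_{d/2,λ}(z - d/2) + (T_L + T_U)/2, where h is the function from the paper. Then T̄ satisfies κ₁·T̄'' - κ₂·T̄'''' = 0 on [0,d], with T̄(0) = T_L, T̄(d) = T_U, and T̄'(0) = T̄'(d) = 0. -/
noncomputable def hdl (d lam : ℝ) (x : ℝ) : ℝ :=
  if lam = 0 then (x ^ 3 - 3 * d ^ 2 * x) / (2 * d ^ 3)
  else -(lam * x * Real.cosh (lam * d) - Real.sinh (lam * x)) /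
    (lam * d * Real.cosh (lam * d) - Real.sinh (lam * d))

lemma sinh_lt_mul_cosh {t : ℝ} (ht : 0 < t) : Real.sinh t < t * Real.cosh t := by
  have h : StrictMonoOn (fun s : ℝ => s * Real.cosh s - Real.sinh s) (Set.Ici 0) := by
    apply strictMonoOn_of_deriv_pos (convex_Ici 0)
    · fun_prop
    · intro s hs
      rw [interior_Ici, Set.mem_Ioi] at hs
      have hder : HasDerivAt (fun s : ℝ => s * Real.cosh s - Real.sinh s)
          (1 * Real.cosh s + s * Real.sinh s - Real.cosh s) s :=
        ((hasDerivAt_id s).mul (Real.hasDerivAt_cosh s)).sub (Real.hasDerivAt_sinh s)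
      rw [hder.deriv]
      have := Real.sinh_pos_iff.mpr hs
      nlinarith
  have := h Set.self_mem_Ici (Set.mem_Ici.mpr ht.le) ht
  simp only [Real.cosh_zero, Real.sinh_zero, zero_mul, sub_zero] at this
  linarith

lemma iteratedDeriv_two (f : ℝ → ℝ) : iteratedDeriv 2 f = deriv (deriv f) := by
  rw [show (2:ℕ) = 1 + 1 from rfl, iteratedDeriv_succ, iteratedDeriv_one]

lemma iteratedDeriv_four (f : ℝ → ℝ) :
    iteratedDeriv 4 f = deriv (deriv (deriv (deriv f))) := by
  rw [show (4:ℕ) = 1 + 1 + 1 + 1 from rfl, iteratedDeriv_succ, iteratedDeriv_succ,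
    iteratedDeriv_succ, iteratedDeriv_one]

lemma deriv_cubic (A B C e : ℝ) :
    deriv (fun z : ℝ => A * (z - e) ^ 3 + (B * (z - e) + C)) =
      fun z => A * (3 * (z - e) ^ 2) + B := by
  funext z
  have hi : HasDerivAt (fun z : ℝ => z - e) 1 z := (hasDerivAt_id z).sub_const e
  have h : HasDerivAt (fun z : ℝ => A * (z - e) ^ 3 + (B * (z - e) + C))
      (A * (3 * (z - e) ^ 2) + B) z := by
    have := ((hi.pow 3).const_mul A).add ((hi.const_mul B).add_const C)
    exact this.congr_deriv (by push_cast; ring)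
  exact h.deriv

lemma deriv_cub1 (A B e : ℝ) :
    deriv (fun z : ℝ => A * (3 * (z - e) ^ 2) + B) = fun z => A * (6 * (z - e)) := by
  funext z
  have hi : HasDerivAt (fun z : ℝ => z - e) 1 z := (hasDerivAt_id z).sub_const e
  have h : HasDerivAt (fun z : ℝ => A * (3 * (z - e) ^ 2) + B)
      (A * (6 * (z - e))) z := by
    have := (((hi.pow 2).const_mul (3:ℝ)).const_mul A).add_const B
    exact this.congr_deriv (by push_cast; ring)
  exact h.deriv

lemma deriv_cub2 (A e : ℝ) :
    deriv (fun z : ℝ => A * (6 * (z - e))) = fun z => A * 6 := by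
  funext z
  have hi : HasDerivAt (fun z : ℝ => z - e) 1 z := (hasDerivAt_id z).sub_const e
  have h : HasDerivAt (fun z : ℝ => A * (6 * (z - e))) (A * 6) z := by
    have := (hi.const_mul (6:ℝ)).const_mul A
    exact this.congr_deriv (by ring)
  exact h.deriv

lemma deriv_cub3 (A : ℝ) : deriv (fun _ : ℝ => A * 6) = fun _ => (0:ℝ) :=
  funext fun z => deriv_const z (A * 6)

lemma deriv_S0 (A B C m e : ℝ) :
    deriv (fun z : ℝ => A * Real.sinh (m * (z - e)) + (B * (z - e) + C)) =
      fun z => A * m * Real.cosh (m * (z - e)) + B := by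
  funext z
  have hi : HasDerivAt (fun z : ℝ => m * (z - e)) m z := by
    have := ((hasDerivAt_id z).sub_const e).const_mul m
    simpa using this
  have h : HasDerivAt (fun z : ℝ => A * Real.sinh (m * (z - e)) + (B * (z - e) + C))
      (A * m * Real.cosh (m * (z - e)) + B) z := by
    have := (hi.sinh.const_mul A).add
      ((((hasDerivAt_id z).sub_const e).const_mul B).add_const C)
    exact this.congr_deriv (by ring)
  exact h.deriv

lemma deriv_S1 (A B m e : ℝ) :
    deriv (fun z : ℝ => A * Real.cosh (m * (z - e)) + B) =
      fun z => A * m * Real.sinh (m * (z - e)) := by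
  funext z
  have hi : HasDerivAt (fun z : ℝ => m * (z - e)) m z := by
    have := ((hasDerivAt_id z).sub_const e).const_mul m
    simpa using this
  have h : HasDerivAt (fun z : ℝ => A * Real.cosh (m * (z - e)) + B)
      (A * m * Real.sinh (m * (z - e))) z := by
    have := (hi.cosh.const_mul A).add_const B
    exact this.congr_deriv (by ring)
  exact h.deriv

lemma deriv_S2 (A m e : ℝ) :
    deriv (fun z : ℝ => A * m * Real.sinh (m * (z - e))) =
      fun z => A * m * m * Real.cosh (m * (z - e)) := by
  funext z
  have hi : HasDerivAt (fun z : ℝ => m * (z - e)) m z := by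
    have := ((hasDerivAt_id z).sub_const e).const_mul m
    simpa using this
  have h : HasDerivAt (fun z : ℝ => A * m * Real.sinh (m * (z - e)))
      (A * m * m * Real.cosh (m * (z - e))) z := by
    have := hi.sinh.const_mul (A * m)
    exact this.congr_deriv (by ring)
  exact h.deriv

lemma deriv_S3 (A m e : ℝ) :
    deriv (fun z : ℝ => A * m * m * Real.cosh (m * (z - e))) =
      fun z => A * m * m * m * Real.sinh (m * (z - e)) := by
  funext z
  have hi : HasDerivAt (fun z : ℝ => m * (z - e)) m z := by
    have := ((hasDerivAt_id z).sub_const e).const_mul m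
    simpa using this
  have h : HasDerivAt (fun z : ℝ => A * m * m * Real.cosh (m * (z - e)))
      (A * m * m * m * Real.sinh (m * (z - e))) z := by
    have := hi.cosh.const_mul (A * m * m)
    exact this.congr_deriv (by ring)
  exact h.deriv

theorem stmt_5 (κ₁ κ₂ d TL TU : ℝ) (hκ₁ : 0 ≤ κ₁) (hκ₂ : 0 < κ₂) (hd : 0 < d)
    (hT : TU < TL)
    (lam : ℝ) (hlam : lam = Real.sqrt (κ₁ / κ₂))
    (Tbar : ℝ → ℝ)
    (hTbar : ∀ z, Tbar z = (TL - TU) / 2 * hdl (d / 2) lam (z - d / 2) + (TL + TU) / 2) :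
    (∀ z ∈ Set.Icc 0 d,
        κ₁ * iteratedDeriv 2 Tbar z - κ₂ * iteratedDeriv 4 Tbar z = 0) ∧
      Tbar 0 = TL ∧ Tbar d = TU ∧ deriv Tbar 0 = 0 ∧ deriv Tbar d = 0 := by
  have hd' : d ≠ 0 := hd.ne'
  by_cases h0 : lam = 0
  · -- polynomial case
    have hk : κ₁ = 0 := by
      have hs : Real.sqrt (κ₁ / κ₂) = 0 := by rw [← hlam, h0]
      have h1 : κ₁ / κ₂ ≤ 0 := by
        by_contra hc
        push_neg at hc
        exact absurd hs (ne_of_gt (Real.sqrt_pos.mpr hc))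
      have h2 : 0 ≤ κ₁ / κ₂ := div_nonneg hκ₁ hκ₂.le
      have : κ₁ / κ₂ = 0 := le_antisymm h1 h2
      field_simp at this
      simpa using this
    have hF : Tbar = fun z : ℝ =>
        (TL - TU) / 2 / (2 * (d / 2) ^ 3) * (z - d / 2) ^ 3 +
        (-((TL - TU) / 2 * (3 * (d / 2) ^ 2) / (2 * (d / 2) ^ 3)) * (z - d / 2) +
          (TL + TU) / 2) := by
      funext z
      rw [hTbar]
      simp only [hdl, if_pos h0]
      ring
    refine ⟨?_, ?_, ?_, ?_, ?_⟩
    · intro z _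
      rw [iteratedDeriv_two, iteratedDeriv_four, hF]
      rw [deriv_cubic, deriv_cub1, deriv_cub2, deriv_cub3]
      simp [hk]
    · rw [hTbar]
      simp only [hdl, if_pos h0]
      field_simp
      ring
    · rw [hTbar]
      simp only [hdl, if_pos h0]
      field_simp
      ring
    · rw [hF, deriv_cubic]
      ring
    · rw [hF, deriv_cubic]
      ring
  · -- hyperbolic case
    have hlampos : 0 < lam :=
      lt_of_le_of_ne (hlam ▸ Real.sqrt_nonneg _) (Ne.symm h0)
    have ht : 0 < lam * (d / 2) := by positivity
    have hDpos : 0 < lam * (d / 2) * Real.cosh (lam * (d / 2)) - Real.sinh (lam * (d / 2)) := by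
      have := sinh_lt_mul_cosh ht
      linarith
    have hD : lam * (d / 2) * Real.cosh (lam * (d / 2)) - Real.sinh (lam * (d / 2)) ≠ 0 :=
      ne_of_gt hDpos
    have hsq : lam ^ 2 = κ₁ / κ₂ := by
      rw [hlam, Real.sq_sqrt (div_nonneg hκ₁ hκ₂.le)]
    have hk : κ₂ * lam ^ 2 = κ₁ := by
      rw [hsq]; field_simp
    have hF : Tbar = fun z : ℝ =>
        (TL - TU) / 2 /
            (lam * (d / 2) * Real.cosh (lam * (d / 2)) - Real.sinh (lam * (d / 2))) *
          Real.sinh (lam * (z - d / 2)) +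
        (-((TL - TU) / 2 * lam * Real.cosh (lam * (d / 2)) /
            (lam * (d / 2) * Real.cosh (lam * (d / 2)) - Real.sinh (lam * (d / 2)))) *
          (z - d / 2) + (TL + TU) / 2) := by
      funext z
      rw [hTbar]
      simp only [hdl, if_neg h0]
      ring
    have h1 : hdl (d / 2) lam (0 - d / 2) = 1 := by
      simp only [hdl, if_neg h0]
      rw [div_eq_iff hD]
      rw [show lam * ((0:ℝ) - d / 2) = -(lam * (d / 2)) by ring, Real.sinh_neg]
      ring
    have h2 : hdl (d / 2) lam (d - d / 2) = -1 := by
      simp only [hdl, if_neg h0]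
      rw [div_eq_iff hD]
      rw [show lam * (d - d / 2) = lam * (d / 2) by ring]
      ring
    refine ⟨?_, ?_, ?_, ?_, ?_⟩
    · intro z _
      rw [iteratedDeriv_two, iteratedDeriv_four, hF]
      rw [deriv_S0, deriv_S1, deriv_S2, deriv_S3]
      rw [← hk]
      ring
    · rw [hTbar, h1]
      ring
    · rw [hTbar, h2]
      ring
    · rw [hF, deriv_S0]
      simp only
      rw [show lam * ((0:ℝ) - d / 2) = -(lam * (d / 2)) by ring, Real.cosh_neg]
      ring
    · rw [hF, deriv_S0]
      simp only
      rw [show lam * (d - d / 2) = lam * (d / 2) by ring]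
      ring
end
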